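/- arXiv:1312.0020 — 2 statements merged into one kernel-verified Lean document; each statement's English description precedes it below -/
import Mathlib

section
/- Let X be a real-valued random variable with cumulative distribution function F, survival function F̄ = 1 − F, and let α > 0. Define the quantile function b(u) = inf{t ∈ ℝ : F(t) ≥ 1 − 1/u} for u > 1. Then F̄ is regularly varying at infinity with index −α if and only if for every x > 0, n·F̄(b(n)·x) → x^{−α} as n → ∞. (This is the pointwise form of the vague convergence n·P(X / F^{-1}(1−1/n) ∈ ·) → μ_α, where μ_α((x,∞]) = x^{−α}.) -/
open MeasureTheory Filter

/-- A function `U : ℝ → ℝ` is regularly varying at infinity with index `ρ` if it is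
eventually positive and `U (t*x) / U t → x ^ ρ` as `t → ∞`, for every `x > 0`. -/
def RegularlyVarying (U : ℝ → ℝ) (ρ : ℝ) : Prop :=
  (∀ᶠ t in atTop, 0 < U t) ∧
  ∀ x : ℝ, 0 < x → Tendsto (fun t => U (t * x) / U t) atTop (nhds (x ^ ρ))

private lemma aux_key (F Fbar : ℝ → ℝ) (hFbar : ∀ x, Fbar x = 1 - F x)
    (hFmono : Monotone F) (hFrc : ∀ x, ContinuousWithinAt F (Set.Ici x) x)
    (hFtop : Tendsto F atTop (nhds 1)) (hFbot : Tendsto F atBot (nhds 0))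
    (α : ℝ) (hα : 0 < α)
    (b : ℕ → ℝ) (hb : ∀ n : ℕ, b n = sInf {t : ℝ | 1 - 1 / (n : ℝ) ≤ F t}) :
    RegularlyVarying Fbar (-α) ↔
      ∀ x : ℝ, 0 < x →
        Tendsto (fun n : ℕ => (n : ℝ) * Fbar (b n * x)) atTop (nhds (x ^ (-α))) := by
  have hF1 : ∀ t, F t ≤ 1 := fun t => hFmono.ge_of_tendsto hFtop t
  have hF0 : ∀ t, 0 ≤ F t := fun t => hFmono.le_of_tendsto hFbot t
  have hFbar0 : ∀ t, 0 ≤ Fbar t := fun t => by rw [hFbar]; linarith [hF1 t]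
  have hFbarA : Antitone Fbar := fun s t hst => by
    rw [hFbar, hFbar]; linarith [hFmono hst]
  have hSne : ∀ n : ℕ, 1 ≤ n → Set.Nonempty {t : ℝ | 1 - 1 / (n : ℝ) ≤ F t} := by
    intro n hn
    have hn' : (0:ℝ) < n := by exact_mod_cast hn
    have h1 : 1 - 1/(n:ℝ) < 1 := by
      have : 0 < 1/(n:ℝ) := by positivity
      linarith
    obtain ⟨t, ht⟩ := (hFtop.eventually (eventually_gt_nhds h1)).exists
    exact ⟨t, ht.le⟩
  have hSbdd : ∀ n : ℕ, 2 ≤ n → BddBelow {t : ℝ | 1 - 1 / (n : ℝ) ≤ F t} := by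
    intro n hn
    have hn' : (2:ℝ) ≤ n := by exact_mod_cast hn
    have hpos : 0 < 1 - 1/(n:ℝ) := by
      have h2 : 1/(n:ℝ) ≤ 1/2 := by
        apply one_div_le_one_div_of_le <;> norm_num
        linarith
      linarith
    obtain ⟨t0, ht0⟩ := (hFbot.eventually (eventually_lt_nhds hpos)).exists
    refine ⟨t0, fun s hs => ?_⟩
    by_contra hlt
    push_neg at hlt
    have : F s ≤ F t0 := hFmono hlt.le
    have hs' : 1 - 1/(n:ℝ) ≤ F s := hs
    linarith
  have hbA1 : ∀ n : ℕ, 2 ≤ n → 1 - 1/(n:ℝ) ≤ F (b n) := by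
    intro n hn
    rw [hb]
    set S := {t : ℝ | 1 - 1 / (n : ℝ) ≤ F t} with hS
    have hne : S.Nonempty := hSne n (by omega)
    have hbdd := hSbdd n hn
    have key : ∀ᶠ t in nhdsWithin (sInf S) (Set.Ioi (sInf S)), 1 - 1/(n:ℝ) ≤ F t := by
      filter_upwards [self_mem_nhdsWithin] with t ht
      obtain ⟨s, hsS, hst⟩ := exists_lt_of_csInf_lt hne ht
      exact le_trans hsS (hFmono hst.le)
    have htd : Tendsto F (nhdsWithin (sInf S) (Set.Ioi (sInf S))) (nhds (F (sInf S))) :=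
      (hFrc (sInf S)).mono_left (nhdsWithin_mono _ Set.Ioi_subset_Ici_self)
    exact ge_of_tendsto htd key
  have hbA2 : ∀ n : ℕ, 2 ≤ n → ∀ t, t < b n → F t < 1 - 1/(n:ℝ) := by
    intro n hn t ht
    by_contra h
    push_neg at h
    have : b n ≤ t := by rw [hb]; exact csInf_le (hSbdd n hn) h
    linarith
  have hbmono : ∀ m n : ℕ, 2 ≤ m → m ≤ n → b m ≤ b n := by
    intro m n h2 hmn
    rw [hb, hb]
    apply csInf_le_csInf (hSbdd m h2) (hSne n (by omega))
    intro t ht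
    have hm0 : (0:ℝ) < m := by exact_mod_cast (by omega : 0 < m)
    have hcast : (m:ℝ) ≤ n := by exact_mod_cast hmn
    have h1 : 1/(n:ℝ) ≤ 1/(m:ℝ) := one_div_le_one_div_of_le hm0 hcast
    have ht' : 1 - 1/(n:ℝ) ≤ F t := ht
    show 1 - 1/(m:ℝ) ≤ F t
    linarith
  have hFbar_bn : ∀ n : ℕ, 2 ≤ n → Fbar (b n) ≤ 1/(n:ℝ) := by
    intro n hn; rw [hFbar]; linarith [hbA1 n hn]
  have hFbar_lt : ∀ n : ℕ, 2 ≤ n → ∀ t, t < b n → 1/(n:ℝ) ≤ Fbar t := by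
    intro n hn t ht; rw [hFbar]; linarith [hbA2 n hn t ht]
  constructor
  · rintro ⟨hpos, hrv⟩ x hx
    -- b n → ∞
    have hbtop : Tendsto b atTop atTop := by
      rw [tendsto_atTop]
      intro M
      obtain ⟨T, hT⟩ := eventually_atTop.1 hpos
      set M' := max M T with hM'
      have hFM' : F M' < 1 := by
        have := hT M' (le_max_right _ _); rw [hFbar] at this; linarith
      obtain ⟨k, hk⟩ := exists_nat_one_div_lt (by linarith : (0:ℝ) < 1 - F M')
      filter_upwards [eventually_ge_atTop (max 2 (k+1))] with n hn
      have h2 : 2 ≤ n := le_trans (le_max_left _ _) hn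
      have hk1 : k + 1 ≤ n := le_trans (le_max_right _ _) hn
      rw [hb]
      refine le_trans (le_max_left M T) (le_csInf (hSne n (by omega)) ?_)
      intro s hs
      by_contra hlt; push_neg at hlt
      have hmono := hFmono hlt.le
      have hk1' : ((k:ℝ)+1) ≤ n := by exact_mod_cast hk1
      have h1n : 1/(n:ℝ) ≤ 1/((k:ℝ)+1) := one_div_le_one_div_of_le (by positivity) hk1'
      have hs' : 1 - 1/(n:ℝ) ≤ F s := hs
      linarith
    -- n * Fbar (b n) → 1
    have hv : Tendsto (fun n : ℕ => (n:ℝ) * Fbar (b n)) atTop (nhds 1) := by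
      rw [tendsto_order]
      constructor
      · intro a' ha'
        set d := (max a' 0 + 1)/2 with hd
        have hma : 0 ≤ max a' 0 := le_max_right _ _
        have hma1 : max a' 0 < 1 := max_lt ha' one_pos
        have hd0 : 0 < d := by rw [hd]; linarith
        have hd1 : d < 1 := by rw [hd]; linarith
        have hda' : a' < d := by
          have h1 : a' ≤ max a' 0 := le_max_left _ _
          rw [hd]; linarith
        set c := d ^ (α⁻¹) with hc
        have hc0 : 0 < c := Real.rpow_pos_of_pos hd0 _
        have hc1 : c < 1 := Real.rpow_lt_one hd0.le hd1 (by positivity)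
        have hcα : c ^ α = d := by
          rw [hc, ← Real.rpow_mul hd0.le, inv_mul_cancel₀ hα.ne', Real.rpow_one]
        have hrvc := (hrv c hc0).comp hbtop
        have hcne : c ^ (-α) ≠ 0 := (Real.rpow_pos_of_pos hc0 _).ne'
        have hrinv := hrvc.inv₀ hcne
        have hval : ((c:ℝ) ^ (-α))⁻¹ = c ^ α := by
          rw [Real.rpow_neg hc0.le, inv_inv]
        rw [hval] at hrinv
        have hda : a' < c ^ α := by rw [hcα]; exact hda'
        have hev1 := hrinv.eventually (eventually_gt_nhds hda)
        filter_upwards [hev1, hbtop.eventually (eventually_gt_atTop 0),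
          hbtop.eventually hpos, (hbtop.atTop_mul_const hc0).eventually hpos,
          eventually_ge_atTop 2] with n h1 hb0 hfb hfbc h2
        simp only [Function.comp_apply] at h1
        have hbc_lt : b n * c < b n := by nlinarith
        have hle : 1/(n:ℝ) ≤ Fbar (b n * c) := hFbar_lt n h2 _ hbc_lt
        have hn0 : (0:ℝ) < n := by exact_mod_cast (by omega : 0 < n)
        have h1le : 1 ≤ (n:ℝ) * Fbar (b n * c) := by
          rw [div_le_iff₀ hn0] at hle
          linarith [hle]
        have hinv_eq : (Fbar (b n * c) / Fbar (b n))⁻¹ = Fbar (b n) / Fbar (b n * c) :=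
          inv_div _ _
        rw [hinv_eq] at h1
        have heq : (n:ℝ) * Fbar (b n) = ((n:ℝ) * Fbar (b n * c)) * (Fbar (b n) / Fbar (b n * c)) := by
          field_simp
        have hr0 : 0 ≤ Fbar (b n) / Fbar (b n * c) :=
          div_nonneg (hFbar0 _) (hFbar0 _)
        calc a' < Fbar (b n) / Fbar (b n * c) := h1
          _ ≤ ((n:ℝ) * Fbar (b n * c)) * (Fbar (b n) / Fbar (b n * c)) :=
              le_mul_of_one_le_left hr0 h1le
          _ = (n:ℝ) * Fbar (b n) := heq.symm
      · intro a' ha'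
        filter_upwards [eventually_ge_atTop 2] with n h2
        have hn0 : (0:ℝ) < n := by exact_mod_cast (by omega : 0 < n)
        have h := hFbar_bn n h2
        have : (n:ℝ) * Fbar (b n) ≤ 1 := by
          calc (n:ℝ) * Fbar (b n) ≤ (n:ℝ) * (1/(n:ℝ)) :=
                mul_le_mul_of_nonneg_left h hn0.le
            _ = 1 := by field_simp
        linarith
    have hcomp := (hrv x hx).comp hbtop
    have hmul := hv.mul hcomp
    rw [one_mul] at hmul
    refine Tendsto.congr' ?_ hmul
    filter_upwards [hbtop.eventually hpos] with n hfb
    simp only [Function.comp_apply]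
    field_simp
  · intro H
    have H1 : Tendsto (fun n : ℕ => (n:ℝ) * Fbar (b n)) atTop (nhds 1) := by
      have h := H 1 one_pos
      rw [Real.one_rpow] at h
      simpa [mul_one] using h
    have Hz : ∀ x : ℝ, 0 < x → Tendsto (fun n : ℕ => Fbar (b n * x)) atTop (nhds 0) := by
      intro x hx
      have h2 := (H x hx).mul tendsto_inv_atTop_nhds_zero_nat
      rw [mul_zero] at h2
      refine Tendsto.congr' ?_ h2
      filter_upwards [eventually_ge_atTop 1] with n hn
      have hn0 : (n:ℝ) ≠ 0 := by
        exact_mod_cast (by omega : n ≠ 0)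
      field_simp
    have hbtop : Tendsto b atTop atTop := by
      have hcmono : Monotone (fun k : ℕ => b (k + 2)) := fun i j hij =>
        hbmono _ _ (by omega) (by omega)
      rcases tendsto_of_monotone hcmono with h | ⟨l, hl⟩
      · exact (tendsto_add_atTop_iff_nat 2).1 h
      · exfalso
        have hble : ∀ k, b (k+2) ≤ l := fun k => hcmono.ge_of_tendsto hl k
        have hz2 : Tendsto (fun k : ℕ => Fbar (b (k+2) * 2)) atTop (nhds 0) :=
          (Hz 2 two_pos).comp (tendsto_add_atTop_nat 2)
        rcases le_or_gt l 0 with hl0 | hl0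
        · have key : ∀ k : ℕ, (((k+2:ℕ)):ℝ) * Fbar (b (k+2) * 1) ≤ (((k+2:ℕ)):ℝ) * Fbar (b (k+2) * 2) := by
            intro k
            have hbk : b (k+2) ≤ 0 := le_trans (hble k) hl0
            have hmul : b (k+2) * 2 ≤ b (k+2) * 1 := by nlinarith
            exact mul_le_mul_of_nonneg_left (hFbarA hmul) (by positivity)
          have lim1 : Tendsto (fun k : ℕ => (((k+2:ℕ)):ℝ) * Fbar (b (k+2) * 1)) atTop (nhds 1) := by
            have h := (H 1 one_pos).comp (tendsto_add_atTop_nat 2)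
            rwa [Real.one_rpow] at h
          have lim2 : Tendsto (fun k : ℕ => (((k+2:ℕ)):ℝ) * Fbar (b (k+2) * 2)) atTop (nhds ((2:ℝ) ^ (-α))) :=
            (H 2 two_pos).comp (tendsto_add_atTop_nat 2)
          have hle : (1:ℝ) ≤ (2:ℝ) ^ (-α) := le_of_tendsto_of_tendsto' lim1 lim2 key
          have hlt : (2:ℝ) ^ (-α) < 1 :=
            Real.rpow_lt_one_of_one_lt_of_neg one_lt_two (by linarith)
          linarith
        · have hFl2 : Fbar (l * 2) ≤ 0 := by
            have hle : ∀ k : ℕ, Fbar (l * 2) ≤ Fbar (b (k+2) * 2) := fun k =>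
              hFbarA (by nlinarith [hble k])
            exact ge_of_tendsto' hz2 hle
          have hev : (fun k : ℕ => (((k+2:ℕ)):ℝ) * Fbar (b (k+2) * 4)) =ᶠ[atTop]
              (fun _ => (0:ℝ)) := by
            filter_upwards [hl.eventually (eventually_gt_nhds (half_lt_self hl0))] with k hk
            have h4 : l * 2 ≤ b (k+2) * 4 := by
              have := hble k; nlinarith
            have hle4 : Fbar (b (k+2)*4) ≤ 0 := le_trans (hFbarA h4) hFl2
            have h0 := hFbar0 (b (k+2) * 4)
            have hz : Fbar (b (k+2)*4) = 0 := le_antisymm hle4 h0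
            rw [hz, mul_zero]
          have lim4 : Tendsto (fun k : ℕ => (((k+2:ℕ)):ℝ) * Fbar (b (k+2) * 4)) atTop (nhds ((4:ℝ) ^ (-α))) :=
            (H 4 (by norm_num)).comp (tendsto_add_atTop_nat 2)
          have h40 : (4:ℝ) ^ (-α) = 0 :=
            tendsto_nhds_unique (Tendsto.congr' hev lim4) tendsto_const_nhds
          exact absurd h40 (Real.rpow_pos_of_pos (by norm_num) _).ne'
    have hFpos : ∀ t, 0 < Fbar t := by
      intro t
      have hev : ∀ᶠ n : ℕ in atTop, (1:ℝ)/2 < (n:ℝ) * Fbar (b n) :=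
        H1.eventually (eventually_gt_nhds (by norm_num))
      obtain ⟨n, hn1, hn2⟩ := (hev.and (hbtop.eventually (eventually_ge_atTop t))).exists
      have hfbn : 0 < Fbar (b n) := by
        by_contra h; push_neg at h
        have hmn : (n:ℝ) * Fbar (b n) ≤ 0 :=
          mul_nonpos_of_nonneg_of_nonpos (Nat.cast_nonneg n) h
        linarith
      exact lt_of_lt_of_le hfbn (hFbarA hn2)
    constructor
    · exact Eventually.of_forall hFpos
    · intro x hx
      have hnn : Tendsto (fun n : ℕ => ((n:ℝ)+1)/(n:ℝ)) atTop (nhds 1) := by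
        have h1 : Tendsto (fun n : ℕ => 1 + ((n:ℝ))⁻¹) atTop (nhds (1+0)) :=
          tendsto_const_nhds.add tendsto_inv_atTop_nhds_zero_nat
        rw [add_zero] at h1
        refine Tendsto.congr' ?_ h1
        filter_upwards [eventually_ge_atTop 1] with n hn
        have hn0 : (n:ℝ) ≠ 0 := by exact_mod_cast (by omega : n ≠ 0)
        field_simp
      have hnn' : Tendsto (fun n : ℕ => (n:ℝ)/((n:ℝ)+1)) atTop (nhds 1) := by
        have h := hnn.inv₀ one_ne_zero
        rw [inv_one] at h
        exact h.congr (fun n => inv_div _ _)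
      have vshift := H1.comp (tendsto_add_atTop_nat 1)
      have ushift := (H x hx).comp (tendsto_add_atTop_nat 1)
      have hP : Tendsto (fun n : ℕ => Fbar (b n * x) / Fbar (b (n+1))) atTop (nhds (x^(-α))) := by
        have h := ((H x hx).div vshift one_ne_zero).mul hnn
        rw [div_one, mul_one] at h
        refine Tendsto.congr' ?_ h
        filter_upwards [eventually_ge_atTop 1] with n hn
        have hn0 : (n:ℝ) ≠ 0 := by exact_mod_cast (by omega : n ≠ 0)
        have hn1 : ((n:ℝ)+1) ≠ 0 := by positivity
        have hf1 : Fbar (b (n+1)) ≠ 0 := (hFpos _).ne'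
        simp only [Function.comp_apply, Pi.div_apply, Nat.cast_add, Nat.cast_one]
        field_simp
      have hQ : Tendsto (fun n : ℕ => Fbar (b (n+1) * x) / Fbar (b n)) atTop (nhds (x^(-α))) := by
        have h := (ushift.div H1 one_ne_zero).mul hnn'
        rw [div_one, mul_one] at h
        refine Tendsto.congr' ?_ h
        filter_upwards [eventually_ge_atTop 1] with n hn
        have hn0 : (n:ℝ) ≠ 0 := by exact_mod_cast (by omega : n ≠ 0)
        have hn1 : ((n:ℝ)+1) ≠ 0 := by positivity
        have hf1 : Fbar (b n) ≠ 0 := (hFpos _).ne'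
        simp only [Function.comp_apply, Pi.div_apply, Nat.cast_add, Nat.cast_one]
        field_simp
      rw [tendsto_order]
      constructor
      · intro a' ha'
        obtain ⟨N₀, hN₀⟩ := eventually_atTop.1 (hQ.eventually (eventually_gt_nhds ha'))
        set N := max N₀ 2 with hN
        filter_upwards [eventually_ge_atTop (b N)] with t ht
        set A := {n : ℕ | 2 ≤ n ∧ b n ≤ t} with hA
        have hNA : N ∈ A := ⟨le_max_right _ _, ht⟩
        obtain ⟨m₀, hm₀t, hm₀2⟩ :=
          ((hbtop.eventually (eventually_gt_atTop t)).and (eventually_ge_atTop 2)).exists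
        have hAbd : BddAbove A := by
          refine ⟨m₀, fun a ha => ?_⟩
          by_contra hcon; push_neg at hcon
          have hba := hbmono m₀ a hm₀2 hcon.le
          have := ha.2
          linarith
        set n := sSup A with hn
        have hnA : n ∈ A := Nat.sSup_mem ⟨N, hNA⟩ hAbd
        have hnN : N ≤ n := le_csSup hAbd hNA
        have hn1 : t < b (n+1) := by
          by_contra h; push_neg at h
          have hmem : n + 1 ∈ A := ⟨by omega, h⟩
          have := le_csSup hAbd hmem
          omega
        have hq := hN₀ n (le_trans (le_max_left _ _) hnN)
        have hle : Fbar (b (n+1) * x) / Fbar (b n) ≤ Fbar (t * x) / Fbar t := by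
          apply div_le_div₀ (hFbar0 _) ?_ (hFpos t) (hFbarA hnA.2)
          exact hFbarA (mul_le_mul_of_nonneg_right hn1.le hx.le)
        exact lt_of_lt_of_le hq hle
      · intro a' ha'
        obtain ⟨N₀, hN₀⟩ := eventually_atTop.1 (hP.eventually (eventually_lt_nhds ha'))
        set N := max N₀ 2 with hN
        filter_upwards [eventually_ge_atTop (b N)] with t ht
        set A := {n : ℕ | 2 ≤ n ∧ b n ≤ t} with hA
        have hNA : N ∈ A := ⟨le_max_right _ _, ht⟩
        obtain ⟨m₀, hm₀t, hm₀2⟩ :=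
          ((hbtop.eventually (eventually_gt_atTop t)).and (eventually_ge_atTop 2)).exists
        have hAbd : BddAbove A := by
          refine ⟨m₀, fun a ha => ?_⟩
          by_contra hcon; push_neg at hcon
          have hba := hbmono m₀ a hm₀2 hcon.le
          have := ha.2
          linarith
        set n := sSup A with hn
        have hnA : n ∈ A := Nat.sSup_mem ⟨N, hNA⟩ hAbd
        have hnN : N ≤ n := le_csSup hAbd hNA
        have hn1 : t < b (n+1) := by
          by_contra h; push_neg at h
          have hmem : n + 1 ∈ A := ⟨by omega, h⟩
          have := le_csSup hAbd hmem
          omega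
        have hq := hN₀ n (le_trans (le_max_left _ _) hnN)
        have hle : Fbar (t * x) / Fbar t ≤ Fbar (b n * x) / Fbar (b (n+1)) := by
          apply div_le_div₀ (hFbar0 _) ?_ (hFpos _) (hFbarA hn1.le)
          exact hFbarA (mul_le_mul_of_nonneg_right hnA.2 hx.le)
        exact lt_of_le_of_lt hle hq

/-- The survival function `F̄ = 1 - F` is regularly varying at infinity with index `-α`
iff `n * F̄(b(n) * x) → x ^ (-α)` for every `x > 0`, where
`b(u) = inf {t | F t ≥ 1 - 1/u}` is the `(1 - 1/u)`-quantile of `F`. -/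
theorem stmt1 {Ω : Type*} [MeasurableSpace Ω] (μ : Measure Ω) [IsProbabilityMeasure μ]
    (X : Ω → ℝ) (hX : Measurable X)
    (F Fbar : ℝ → ℝ)
    (hF : ∀ x, F x = (μ {ω | X ω ≤ x}).toReal)
    (hFbar : ∀ x, Fbar x = 1 - F x)
    (α : ℝ) (hα : 0 < α)
    (b : ℕ → ℝ) (hb : ∀ n : ℕ, b n = sInf {t : ℝ | 1 - 1 / (n : ℝ) ≤ F t}) :
    RegularlyVarying Fbar (-α) ↔
      ∀ x : ℝ, 0 < x →
        Tendsto (fun n : ℕ => (n : ℝ) * Fbar (b n * x)) atTop (nhds (x ^ (-α))) := by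
  haveI hXmap : IsProbabilityMeasure (μ.map X) := Measure.isProbabilityMeasure_map hX.aemeasurable
  have hFeq : F = fun x => ProbabilityTheory.cdf (μ.map X) x := by
    funext x
    rw [hF, ProbabilityTheory.cdf_eq_real, measureReal_def, Measure.map_apply hX measurableSet_Iic]
    rfl
  refine aux_key F Fbar hFbar ?_ ?_ ?_ ?_ α hα b hb
  · rw [hFeq]; exact ProbabilityTheory.monotone_cdf _
  · rw [hFeq]; exact fun x => (ProbabilityTheory.cdf _).right_continuous x
  · rw [hFeq]; exact ProbabilityTheory.tendsto_cdf_atTop _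
  · rw [hFeq]; exact ProbabilityTheory.tendsto_cdf_atBot _
end

section
/- Let n ≥ 1 and let W be a symmetric n×n real matrix with nonnegative entries, D the diagonal degree matrix with d_i = Σ_j W_{ij}, and L = D − W the graph Laplacian. Assume every degree is strictly positive: d_i > 0 for all i. Define the normalized graph Laplacian L_sym = D^{−1/2} L D^{−1/2}. Let G be the simple graph on {1,…,n} in which distinct vertices i and j are adjacent if and only if W_{ij} > 0, and let A_1, …, A_k be its connected components. Then L_sym is symmetric and positive semidefinite, and the kernel of L_sym is exactly the linear span of the vectors D^{1/2}·𝟙_{A_1}, …, D^{1/2}·𝟙_{A_k}. In particular, the multiplicity of the eigenvalue 0 of L_sym equals k, the number of connected components of G. -/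
open Matrix

def simGraph {n : ℕ} (W : Matrix (Fin n) (Fin n) ℝ) (hW : W.IsSymm) :
    SimpleGraph (Fin n) where
  Adj i j := i ≠ j ∧ 0 < W i j
  symm := ⟨fun i j h => ⟨h.1.symm, hW.apply i j ▸ h.2⟩⟩
  loopless := ⟨fun i h => h.1 rfl⟩

private lemma walk_eq' {n : ℕ} {G : SimpleGraph (Fin n)} (x : Fin n → ℝ)
    (h : ∀ ⦃i j⦄, G.Adj i j → x i = x j) {i j : Fin n} (hr : G.Reachable i j) :
    x i = x j := by
  obtain ⟨w⟩ := hr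
  induction w with
  | nil => rfl
  | cons h' _ ih => exact (h h').trans ih

private lemma quad_form' {n : ℕ} (W : Matrix (Fin n) (Fin n) ℝ) (hsymm : W.IsSymm)
    (deg : Fin n → ℝ) (hdeg : ∀ i, deg i = ∑ j, W i j) (x : Fin n → ℝ) :
    x ⬝ᵥ ((Matrix.diagonal deg - W) *ᵥ x) =
      (∑ i, ∑ j, W i j * (x i - x j) ^ 2) / 2 := by
  have hsw : ∀ i j, W j i = W i j := fun i j => hsymm.apply i j
  have expand : x ⬝ᵥ ((Matrix.diagonal deg - W) *ᵥ x)
      = (∑ i, ∑ j, W i j * x i ^ 2) - ∑ i, ∑ j, W i j * x i * x j := by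
    rw [Matrix.sub_mulVec, dotProduct_sub]
    congr 1
    · simp only [dotProduct, Matrix.mulVec_diagonal, hdeg, Finset.sum_mul, Finset.mul_sum]
      exact Finset.sum_congr rfl fun i _ => Finset.sum_congr rfl fun j _ => by ring
    · simp only [dotProduct, Matrix.mulVec, Finset.mul_sum]
      exact Finset.sum_congr rfl fun i _ => Finset.sum_congr rfl fun j _ => by ring
  have swap : ∑ i, ∑ j, W i j * x j ^ 2 = ∑ i, ∑ j, W i j * x i ^ 2 := by
    rw [Finset.sum_comm]
    exact Finset.sum_congr rfl fun i _ => Finset.sum_congr rfl fun j _ => by rw [hsw]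
  have key : (∑ i, ∑ j, W i j * (x i - x j) ^ 2)
      = ∑ i, ∑ j, (W i j * x i ^ 2 + W i j * x j ^ 2 - 2 * (W i j * x i * x j)) :=
    Finset.sum_congr rfl fun i _ => Finset.sum_congr rfl fun j _ => by ring
  rw [expand, key]
  simp only [Finset.sum_add_distrib, Finset.sum_sub_distrib, ← Finset.mul_sum]
  rw [swap]; ring

/-- For strictly positive degrees, the normalized graph Laplacian
`L_sym = D^{-1/2} L D^{-1/2}` is symmetric positive semidefinite and its kernel is exactly
the span of the vectors `D^{1/2} 𝟙_{A_c}`, where the `A_c` are the connected components of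
the similarity graph; in particular the multiplicity of the eigenvalue `0` of `L_sym`
equals the number of connected components. -/
theorem stmt11 {n : ℕ} (hn : 1 ≤ n) (W : Matrix (Fin n) (Fin n) ℝ)
    (hsymm : W.IsSymm) (hnonneg : ∀ i j, 0 ≤ W i j)
    (deg : Fin n → ℝ) (hdeg : ∀ i, deg i = ∑ j, W i j)
    (hpos : ∀ i, 0 < deg i)
    (D L Lsym : Matrix (Fin n) (Fin n) ℝ)
    (hD : D = Matrix.diagonal deg)
    (hL : L = D - W)
    (hLsym : Lsym =
      (Matrix.diagonal fun i => (Real.sqrt (deg i))⁻¹) * L *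
        (Matrix.diagonal fun i => (Real.sqrt (deg i))⁻¹)) :
    Lsym.PosSemidef ∧
    LinearMap.ker (Matrix.toLin' Lsym) =
      Submodule.span ℝ
        {v : Fin n → ℝ | ∃ c : (simGraph W hsymm).ConnectedComponent,
          v = fun i => Real.sqrt (deg i) *
            Set.indicator {j | (simGraph W hsymm).connectedComponentMk j = c}
              (fun _ => (1 : ℝ)) i} ∧
    Module.finrank ℝ (LinearMap.ker (Matrix.toLin' Lsym)) =
      Nat.card (simGraph W hsymm).ConnectedComponent := by
  classical
  set G := simGraph W hsymm with hG
  set s : Fin n → ℝ := fun i => Real.sqrt (deg i) with hsdef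
  have hspos : ∀ i, 0 < s i := fun i => Real.sqrt_pos.mpr (hpos i)
  have hsne : ∀ i, s i ≠ 0 := fun i => (hspos i).ne'
  set Sinv : Matrix (Fin n) (Fin n) ℝ := Matrix.diagonal fun i => (s i)⁻¹ with hSinvdef
  -- indicator vectors
  set vfun : G.ConnectedComponent → (Fin n → ℝ) :=
    fun c => fun i => s i *
      Set.indicator {j | G.connectedComponentMk j = c} (fun _ => (1 : ℝ)) i with hvfun
  have hvfun_apply : ∀ c i, vfun c i =
      if G.connectedComponentMk i = c then s i else 0 := by
    intro c i
    by_cases h : G.connectedComponentMk i = c <;>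
      simp [hvfun, Set.indicator_apply, h]
  -- mulVec form of Lsym
  have hLsymVec : ∀ y, Lsym *ᵥ y = Sinv *ᵥ ((Matrix.diagonal deg - W) *ᵥ (Sinv *ᵥ y)) := by
    intro y
    rw [hLsym, hL, hD, ← Matrix.mulVec_mulVec, ← Matrix.mulVec_mulVec]
  have hdot : ∀ y z : Fin n → ℝ, y ⬝ᵥ (Sinv *ᵥ z) = (Sinv *ᵥ y) ⬝ᵥ z := by
    intro y z
    simp only [dotProduct, Matrix.mulVec_diagonal, hSinvdef]
    exact Finset.sum_congr rfl fun i _ => by ring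
  have hquad : ∀ y, y ⬝ᵥ (Lsym *ᵥ y)
      = (∑ i, ∑ j, W i j * ((Sinv *ᵥ y) i - (Sinv *ᵥ y) j) ^ 2) / 2 := by
    intro y
    rw [hLsymVec, hdot, quad_form' W hsymm deg hdeg]
  have hterm_nonneg : ∀ (x : Fin n → ℝ) (i j : Fin n), 0 ≤ W i j * (x i - x j) ^ 2 :=
    fun x i j => mul_nonneg (hnonneg i j) (sq_nonneg _)
  -- hermitian
  have hSh : (Matrix.diagonal fun i => (s i)⁻¹)ᴴ = Matrix.diagonal fun i => (s i)⁻¹ := by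
    rw [Matrix.diagonal_conjTranspose]
    congr 1
  have hDW : (Matrix.diagonal deg - W).IsHermitian := by
    rw [Matrix.IsHermitian, Matrix.conjTranspose_sub]
    congr 1
    rw [Matrix.diagonal_conjTranspose]
    congr 1
  have hLherm : Lsym.IsHermitian := by
    rw [hLsym, hL, hD, hSinvdef]
    nth_rewrite 2 [← hSh]
    exact Matrix.isHermitian_mul_mul_conjTranspose _ hDW
  have hpsd : Lsym.PosSemidef := by
    refine Matrix.posSemidef_iff_dotProduct_mulVec.mpr ⟨hLherm, fun y => ?_⟩
    have : star y = y := by simp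
    rw [this, hquad]
    have : 0 ≤ ∑ i, ∑ j, W i j * ((Sinv *ᵥ y) i - (Sinv *ᵥ y) j) ^ 2 :=
      Finset.sum_nonneg fun i _ => Finset.sum_nonneg fun j _ => hterm_nonneg _ i j
    linarith
  -- generators are in the kernel
  have hgen_ker : ∀ c, Lsym *ᵥ vfun c = 0 := by
    intro c
    have hind : Sinv *ᵥ vfun c = fun i =>
        if G.connectedComponentMk i = c then (1 : ℝ) else 0 := by
      funext i
      rw [Matrix.mulVec_diagonal]
      rw [hvfun_apply]
      by_cases h : G.connectedComponentMk i = c <;>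
        simp [h, inv_mul_cancel₀ (hsne i)]
    rw [hLsymVec, hind]
    have hzero : (Matrix.diagonal deg - W) *ᵥ
        (fun i => if G.connectedComponentMk i = c then (1 : ℝ) else 0) = 0 := by
      funext i
      simp only [Pi.zero_apply]
      rw [Matrix.sub_mulVec]
      simp only [Pi.sub_apply, Matrix.mulVec_diagonal]
      have hWmv : (W *ᵥ fun j => if G.connectedComponentMk j = c then (1 : ℝ) else 0) i
          = ∑ j, W i j * (if G.connectedComponentMk j = c then (1 : ℝ) else 0) := rfl
      rw [hWmv]
      have hWind : ∀ j, W i j * (if G.connectedComponentMk j = c then (1 : ℝ) else 0)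
          = W i j * (if G.connectedComponentMk i = c then (1 : ℝ) else 0) := by
        intro j
        rcases eq_or_lt_of_le (hnonneg i j) with h0 | h0
        · rw [← h0]; ring
        · have hmk : G.connectedComponentMk j = G.connectedComponentMk i := by
            by_cases hij : i = j
            · rw [hij]
            · exact (SimpleGraph.ConnectedComponent.sound
                (SimpleGraph.Adj.reachable (⟨hij, h0⟩ : G.Adj i j))).symm
          rw [hmk]
      rw [Finset.sum_congr rfl fun j _ => hWind j, ← Finset.sum_mul, ← hdeg]
      ring
    rw [hzero, Matrix.mulVec_zero]
  -- kernel equality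
  have hker : LinearMap.ker (Matrix.toLin' Lsym) =
      Submodule.span ℝ
        {v : Fin n → ℝ | ∃ c : G.ConnectedComponent,
          v = fun i => s i *
            Set.indicator {j | G.connectedComponentMk j = c} (fun _ => (1 : ℝ)) i} := by
    apply le_antisymm
    · intro y hy
      have h0 : Lsym *ᵥ y = 0 := by
        have := LinearMap.mem_ker.mp hy
        rwa [Matrix.toLin'_apply] at this
      set x : Fin n → ℝ := Sinv *ᵥ y with hx
      have hq0 : (∑ i, ∑ j, W i j * (x i - x j) ^ 2) = 0 := by
        have h1 : y ⬝ᵥ (Lsym *ᵥ y) = 0 := by rw [h0, dotProduct_zero]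
        rw [hquad] at h1
        linarith
      have hterm0 : ∀ i j, W i j * (x i - x j) ^ 2 = 0 := by
        intro i j
        have houter := (Finset.sum_eq_zero_iff_of_nonneg
          (fun i _ => Finset.sum_nonneg fun j _ => hterm_nonneg x i j)).mp hq0 i
          (Finset.mem_univ i)
        exact (Finset.sum_eq_zero_iff_of_nonneg
          (fun j _ => hterm_nonneg x i j)).mp houter j (Finset.mem_univ j)
      have hadj : ∀ ⦃i j⦄, G.Adj i j → x i = x j := by
        intro i j hij
        have := hterm0 i j
        have hW0 : W i j ≠ 0 := ne_of_gt hij.2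
        have : (x i - x j) ^ 2 = 0 := by
          rcases mul_eq_zero.mp this with h | h
          · exact absurd h hW0
          · exact h
        have := pow_eq_zero_iff (n := 2) (by norm_num) |>.mp this
        linarith [sub_eq_zero.mp this]
      set f : G.ConnectedComponent → ℝ :=
        SimpleGraph.ConnectedComponent.lift x
          (fun v w p _ => walk_eq' x hadj ⟨p⟩) with hf
      have hfmk : ∀ i, f (G.connectedComponentMk i) = x i := fun i => rfl
      have hyeq : y = ∑ c, f c • vfun c := by
        funext i
        have hsum : (∑ c, f c • vfun c) i = ∑ c, f c * vfun c i := by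
          simp [Finset.sum_apply]
        rw [hsum]
        have hcollect : ∀ c : G.ConnectedComponent, f c * vfun c i =
            if c = G.connectedComponentMk i then f (G.connectedComponentMk i) * s i else 0 := by
          intro c
          rw [hvfun_apply]
          by_cases h : G.connectedComponentMk i = c
          · rw [if_pos h, if_pos h.symm, ← h]
          · rw [if_neg h, if_neg (Ne.symm h), mul_zero]
        rw [Finset.sum_congr rfl fun c _ => hcollect c, Finset.sum_ite_eq' Finset.univ,
          if_pos (Finset.mem_univ _)]
        rw [hfmk]
        have hxi : x i = (s i)⁻¹ * y i := by
          rw [hx, Matrix.mulVec_diagonal]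
        rw [hxi]
        field_simp [hsne i]
      rw [hyeq]
      exact Submodule.sum_mem _ fun c _ => Submodule.smul_mem _ _
        (Submodule.subset_span ⟨c, rfl⟩)
    · rw [Submodule.span_le]
      rintro v ⟨c, rfl⟩
      have : Matrix.toLin' Lsym (vfun c) = 0 := by
        rw [Matrix.toLin'_apply]; exact hgen_ker c
      exact LinearMap.mem_ker.mpr this
  refine ⟨hpsd, hker, ?_⟩
  -- dimension count
  haveI : Fintype G.ConnectedComponent := Fintype.ofFinite _
  have hli : LinearIndependent ℝ vfun := by
    rw [Fintype.linearIndependent_iff]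
    intro g hg c
    obtain ⟨i, rfl⟩ := Quot.exists_rep c
    have heval := congrFun hg i
    have hsum : (∑ c, g c • vfun c) i = ∑ c, g c * vfun c i := by
      simp [Finset.sum_apply]
    rw [hsum] at heval
    have hcollect : ∀ c : G.ConnectedComponent, g c * vfun c i =
        if c = G.connectedComponentMk i then g (G.connectedComponentMk i) * s i else 0 := by
      intro c
      rw [hvfun_apply]
      by_cases h : G.connectedComponentMk i = c
      · rw [if_pos h, if_pos h.symm, ← h]
      · rw [if_neg h, if_neg (Ne.symm h), mul_zero]
    rw [Finset.sum_congr rfl fun c _ => hcollect c, Finset.sum_ite_eq' Finset.univ,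
      if_pos (Finset.mem_univ _), Pi.zero_apply] at heval
    have := mul_eq_zero.mp heval
    rcases this with h | h
    · exact h
    · exact absurd h (hsne i)
  have hrange : {v : Fin n → ℝ | ∃ c : G.ConnectedComponent,
      v = fun i => s i *
        Set.indicator {j | G.connectedComponentMk j = c} (fun _ => (1 : ℝ)) i}
      = Set.range vfun := by
    ext v
    constructor
    · rintro ⟨c, rfl⟩; exact ⟨c, rfl⟩
    · rintro ⟨c, rfl⟩; exact ⟨c, rfl⟩
  rw [hker, hrange, finrank_span_eq_card hli, Nat.card_eq_fintype_card]
end
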